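/- Let α > 0 and ω > 0, and define u(x,t) = 2α√ω (√(α²+ω) + √ω) e^{x√ω + iωt} / ( α²(e^{2x√ω} − 1) + 2√ω (√(α²+ω) + √ω) e^{2x√ω} ). Then for all t ∈ ℝ: u(0,t) = α e^{iωt} and ∂_x u(0,t) = −α√(ω + α²) e^{iωt}. -/

import Mathlib

open MeasureTheory Set

noncomputable section

/-- The explicit function
`u(x,t) = 2α√ω(√(α²+ω)+√ω) e^{x√ω + iωt} / (α²(e^{2x√ω}-1) + 2√ω(√(α²+ω)+√ω)e^{2x√ω})`. -/
def uExact (α ω : ℝ) : ℝ → ℝ → ℂ := fun x t =>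
  ((2 * α * Real.sqrt ω * (Real.sqrt (α ^ 2 + ω) + Real.sqrt ω) : ℝ) : ℂ) *
      Complex.exp ((x * Real.sqrt ω : ℝ) + Complex.I * ω * t) /
    (((α ^ 2 : ℝ) : ℂ) * (Complex.exp ((2 * x * Real.sqrt ω : ℝ) : ℂ) - 1) +
      ((2 * Real.sqrt ω * (Real.sqrt (α ^ 2 + ω) + Real.sqrt ω) : ℝ) : ℂ) *
        Complex.exp ((2 * x * Real.sqrt ω : ℝ) : ℂ))

lemma hasDerivAt_cexp_real (c : ℂ) (x : ℝ) :
    HasDerivAt (fun y : ℝ => Complex.exp (c * y)) (c * Complex.exp (c * x)) x := by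
  have h : HasDerivAt (fun z : ℂ => Complex.exp (c * z))
      (Complex.exp (c * x) * c) (x : ℂ) := by
    simpa using ((hasDerivAt_id (x:ℂ)).const_mul c).cexp
  simpa [mul_comm] using h.comp_ofReal

/-- For `α > 0`, `ω > 0`, the explicit function `uExact α ω` has boundary values
`u(0,t) = α e^{iωt}` and `∂ₓu(0,t) = -α√(ω+α²) e^{iωt}` for all `t ∈ ℝ`. -/
theorem uExact_boundary_values (α ω : ℝ) (hα : 0 < α) (hω : 0 < ω) :
    ∀ t : ℝ,
      uExact α ω 0 t = (α : ℂ) * Complex.exp (Complex.I * ω * t) ∧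
      deriv (fun x => uExact α ω x t) 0 =
        -(α : ℂ) * (Real.sqrt (ω + α ^ 2) : ℂ) * Complex.exp (Complex.I * ω * t) := by
  intro t
  have hspos : (0:ℝ) < Real.sqrt ω := Real.sqrt_pos.2 hω
  have hqpos : (0:ℝ) < Real.sqrt (α ^ 2 + ω) := Real.sqrt_pos.2 (by positivity)
  set s : ℝ := Real.sqrt ω with hs
  set q : ℝ := Real.sqrt (α ^ 2 + ω) with hq
  have hqω : Real.sqrt (ω + α ^ 2) = q := by rw [hq, add_comm]
  have hq2 : (q:ℂ) ^ 2 = (α:ℂ) ^ 2 + (s:ℂ) ^ 2 := by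
    have h1 : q ^ 2 = α ^ 2 + ω := Real.sq_sqrt (by positivity)
    have h2 : s ^ 2 = ω := Real.sq_sqrt hω.le
    have h3 : q ^ 2 = α ^ 2 + s ^ 2 := by rw [h1, h2]
    exact_mod_cast h3
  set E : ℂ := Complex.exp (Complex.I * ω * t) with hE
  have hSne : (s:ℂ) ≠ 0 := by exact_mod_cast hspos.ne'
  have hQSne : (q:ℂ) + (s:ℂ) ≠ 0 := by
    have : (0:ℝ) < q + s := by linarith
    exact_mod_cast this.ne'
  have hBne : ((2 * s * (q + s) : ℝ) : ℂ) ≠ 0 := by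
    push_cast; intro h
    rcases mul_eq_zero.1 h with h' | h'
    · rcases mul_eq_zero.1 h' with h'' | h''
      · norm_num at h''
      · exact hSne h''
    · exact hQSne h'
  -- rewrite the function in a convenient form
  have hfun : (fun x : ℝ => uExact α ω x t) = fun x : ℝ =>
      (((2 * α * s * (q + s) : ℝ) : ℂ) * E) * Complex.exp ((s:ℂ) * x) /
        (((α ^ 2 : ℝ) : ℂ) * (Complex.exp (((2*s:ℝ):ℂ) * x) - 1) +
          ((2 * s * (q + s) : ℝ) : ℂ) * Complex.exp (((2*s:ℝ):ℂ) * x)) := by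
    funext x
    simp only [uExact, hE, ← hs, ← hq]
    push_cast
    rw [Complex.exp_add]
    ring_nf
  constructor
  · rw [show uExact α ω 0 t = (fun x : ℝ => uExact α ω x t) 0 from rfl, hfun]
    simp only [Complex.ofReal_zero, mul_zero, Complex.exp_zero]
    rw [div_eq_iff (by simpa using hBne)]
    push_cast
    ring
  · rw [hfun]
    have hN : HasDerivAt (fun x : ℝ => (((2 * α * s * (q + s) : ℝ) : ℂ) * E) *
        Complex.exp ((s:ℂ) * x))
        ((((2 * α * s * (q + s) : ℝ) : ℂ) * E) * ((s:ℂ) * Complex.exp ((s:ℂ) * 0))) 0 :=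
      (hasDerivAt_cexp_real (s:ℂ) 0).const_mul _
    have hD : HasDerivAt (fun x : ℝ =>
        ((α ^ 2 : ℝ) : ℂ) * (Complex.exp (((2*s:ℝ):ℂ) * x) - 1) +
          ((2 * s * (q + s) : ℝ) : ℂ) * Complex.exp (((2*s:ℝ):ℂ) * x))
        (((α ^ 2 : ℝ) : ℂ) * (((2*s:ℝ):ℂ) * Complex.exp (((2*s:ℝ):ℂ) * 0)) +
          ((2 * s * (q + s) : ℝ) : ℂ) * (((2*s:ℝ):ℂ) * Complex.exp (((2*s:ℝ):ℂ) * 0))) 0 := by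
      exact (((hasDerivAt_cexp_real ((2*s:ℝ):ℂ) 0).sub_const 1).const_mul _).add
        ((hasDerivAt_cexp_real ((2*s:ℝ):ℂ) 0).const_mul _)
    have hD0 : (((α ^ 2 : ℝ) : ℂ) * (Complex.exp (((2*s:ℝ):ℂ) * 0) - 1) +
        ((2 * s * (q + s) : ℝ) : ℂ) * Complex.exp (((2*s:ℝ):ℂ) * 0)) ≠ 0 := by
      simpa using hBne
    have h := (hN.div hD hD0).deriv
    simp only [Pi.div_def] at h
    rw [h]
    simp only [Complex.ofReal_zero, mul_zero, Complex.exp_zero, mul_one, sub_self,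
      Complex.ofReal_mul, Complex.ofReal_ofNat, Complex.ofReal_add, hqω]
    rw [div_eq_iff (pow_ne_zero 2 (by simpa using hBne))]
    push_cast
    linear_combination (4 * (α:ℂ) * E * (s:ℂ)^2 * ((q:ℂ) + (s:ℂ))) * hq2

end
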